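/- arXiv:1208.4578 — 2 statements merged into one kernel-verified Lean document; each statement's English description precedes it below -/
import Mathlib

section
/- Let g : ℝ → ℝ be continuous, of rapid decay, with all moments vanishing, and support not compact. Then there exists a sequence {x_n} with |x_n| → ∞ such that g(x_{2n}) > 0 and g(x_{2n+1}) < 0; in particular g has an unbounded sequence of sign changes. -/
open MeasureTheory Filter Topology

noncomputable def ft (f : ℝ → ℂ) (ω : ℝ) : ℂ :=
  ∫ x : ℝ, Complex.exp (-(Complex.I * ω * x)) * f x

def IsSignatureWavelet (κ : SchwartzMap ℝ ℂ) : Prop :=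
  κ ≠ 0 ∧
  (∃ c d : ℝ, 0 < c ∧ c < d ∧ ∀ ω : ℝ, ft (⇑κ) ω ≠ 0 → ω ∈ Set.Icc c d) ∧
  (∀ ω : ℝ, (ft (⇑κ) ω).im = 0 ∧ 0 ≤ (ft (⇑κ) ω).re)

noncomputable def csgn (z : ℂ) : ℂ := if z = 0 then 0 else z / ((‖z‖ : ℝ) : ℂ)

noncomputable def wcoeff (f : ℝ → ℂ) (κ : SchwartzMap ℝ ℂ) (a b : ℝ) : ℂ :=
  (Real.sqrt a : ℂ)⁻¹ * ∫ x : ℝ, f x * κ ((x - b) / a)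

open Classical in
noncomputable def signature (f : ℝ → ℂ) (b : ℝ) : ℂ :=
  if h : ∃ z : ℂ, ∀ κ : SchwartzMap ℝ ℂ, IsSignatureWavelet κ →
      Filter.Tendsto (fun a => csgn (wcoeff f κ a b)) (𝓝[>] (0:ℝ)) (𝓝 z)
  then h.choose else 0

lemma aux_integrable_mul_pow (g : ℝ → ℝ) (hcont : Continuous g)
    (hdecay : ∀ k : ℕ, ∃ C : ℝ, ∀ x : ℝ, |g x| ≤ C * (1 + |x|) ^ (-(k : ℝ)))
    (k : ℕ) : Integrable (fun x : ℝ => g x * x ^ k) := by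
  obtain ⟨C, hC⟩ := hdecay (k + 2)
  have hbase : Integrable (fun x : ℝ => C * (1 + ‖x‖) ^ (-(2:ℝ))) :=
    (integrable_one_add_norm (by simp)).const_mul C
  refine hbase.mono' ((hcont.mul (continuous_pow k)).aestronglyMeasurable) ?_
  filter_upwards with x
  have h1 : (0:ℝ) < 1 + |x| := by positivity
  have hpow : |x| ^ k ≤ (1 + |x|) ^ k :=
    pow_le_pow_left₀ (abs_nonneg x) (by linarith) k
  have hCpos : 0 ≤ C * (1 + |x|) ^ (-((k + 2 : ℕ) : ℝ)) := (abs_nonneg _).trans (hC x)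
  have hkey : (1 + |x|) ^ (-((k + 2 : ℕ) : ℝ)) * (1 + |x|) ^ k = (1 + |x|) ^ (-(2:ℝ)) := by
    rw [← Real.rpow_natCast (1 + |x|) k, ← Real.rpow_add h1]
    push_cast
    ring_nf
  have : ‖g x * x ^ k‖ = |g x| * |x| ^ k := by
    rw [Real.norm_eq_abs, abs_mul, abs_pow]
  rw [this, Real.norm_eq_abs]
  calc |g x| * |x| ^ k
      ≤ (C * (1 + |x|) ^ (-((k + 2 : ℕ) : ℝ))) * (1 + |x|) ^ k :=
        mul_le_mul (hC x) hpow (pow_nonneg (abs_nonneg x) k) hCpos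
    _ = C * (1 + |x|) ^ (-(2:ℝ)) := by rw [mul_assoc, hkey]

lemma aux_unbounded_support (g : ℝ → ℝ) (hsupp : ¬ IsCompact (tsupport g)) :
    ∀ R : ℝ, ∃ z : ℝ, R < |z| ∧ g z ≠ 0 := by
  intro R
  have hclosed : IsClosed (tsupport g) := isClosed_tsupport g
  have hnb : ¬ Bornology.IsBounded (tsupport g) := by
    intro hb
    exact hsupp (Metric.isCompact_iff_isClosed_bounded.mpr ⟨hclosed, hb⟩)
  rw [isBounded_iff_forall_norm_le] at hnb
  push_neg at hnb
  obtain ⟨y, hy, hyR⟩ := hnb R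
  have hyabs : R < |y| := by rwa [Real.norm_eq_abs] at hyR
  have hopen : IsOpen {x : ℝ | R < |x|} := isOpen_lt continuous_const continuous_abs
  have := mem_closure_iff.mp hy {x : ℝ | R < |x|} hopen hyabs
  obtain ⟨z, hz1, hz2⟩ := this
  exact ⟨z, hz1, hz2⟩

lemma aux_core (g : ℝ → ℝ) (hcont : Continuous g)
    (hint : ∀ k : ℕ, Integrable (fun x : ℝ => g x * x ^ k))
    (hmom : ∀ k : ℕ, ∫ x : ℝ, g x * x ^ k = 0)
    (hne : ∀ R : ℝ, ∃ z : ℝ, R < |z| ∧ g z ≠ 0)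
    (R : ℝ) (hR : 0 < R) (hle : ∀ x : ℝ, R < |x| → g x ≤ 0) : False := by
  obtain ⟨z, hz, hgz0⟩ := hne R
  have hgz : g z < 0 := lt_of_le_of_ne (hle z hz) hgz0
  set m : ℝ := (|z| + R) / 2 with hm
  have hmR : R < m := by rw [hm]; linarith
  have hmz : m < |z| := by rw [hm]; linarith
  have hm0 : 0 < m := hR.trans hmR
  -- find a small interval around z where g < g z / 2 and |x| > m
  have hV : IsOpen {x : ℝ | g x < g z / 2 ∧ m < |x|} :=
    (isOpen_lt hcont continuous_const).inter (isOpen_lt continuous_const continuous_abs)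
  have hzV : z ∈ {x : ℝ | g x < g z / 2 ∧ m < |x|} := ⟨by simpa using by linarith, hmz⟩
  obtain ⟨r, hr0, hball⟩ := Metric.isOpen_iff.mp hV z hzV
  set ε : ℝ := r / 2 with hε
  have hε0 : 0 < ε := by positivity
  set I : Set ℝ := Set.Icc (z - ε) (z + ε) with hI
  have hIV : ∀ x ∈ I, g x < g z / 2 ∧ m < |x| := by
    intro x hx
    apply hball
    rw [Metric.mem_ball, Real.dist_eq, abs_sub_lt_iff]
    obtain ⟨h1, h2⟩ := hx
    constructor <;> [linarith; linarith]
  set A : Set ℝ := Set.Icc (-R) R with hA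
  have hAc : Aᶜ = {x : ℝ | R < |x|} := by
    ext x
    simp only [hA, Set.mem_compl_iff, Set.mem_Icc, Set.mem_setOf_eq, not_and_or, not_le, lt_abs]
    constructor
    · rintro (h | h)
      · right; linarith
      · left; exact h
    · rintro (h | h)
      · right; exact h
      · left; linarith
  have hIsubAc : I ⊆ Aᶜ := by
    intro x hx
    rw [hAc]
    exact hmR.trans (hIV x hx).2
  set M : ℝ := ∫ x : ℝ, |g x| with hM
  have hgint : Integrable g := by simpa using hint 0
  have hM0 : 0 ≤ M := integral_nonneg fun x => abs_nonneg _
  set c : ℝ := (-(g z) / 2) * (2 * ε) with hc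
  have hc0 : 0 < c := by
    apply mul_pos
    · linarith
    · linarith
  have key : ∀ k : ℕ, c * m ^ (2 * k) ≤ M * R ^ (2 * k) := by
    intro k
    set f : ℝ → ℝ := fun x => g x * x ^ (2 * k) with hf
    have hfint : Integrable f := hint (2 * k)
    have hsplit : (∫ x in A, f x) + (∫ x in Aᶜ, f x) = 0 := by
      rw [integral_add_compl measurableSet_Icc hfint]
      exact hmom (2 * k)
    -- E1: integral over A
    have hE1 : (∫ x in A, f x) ≤ M * R ^ (2 * k) := by
      have hb : IntegrableOn (fun x : ℝ => |g x| * R ^ (2 * k)) A :=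
        (hgint.abs.mul_const _).integrableOn
      have hmono : (∫ x in A, f x) ≤ ∫ x in A, |g x| * R ^ (2 * k) := by
        apply setIntegral_mono_on hfint.integrableOn hb measurableSet_Icc
        intro x hx
        have hxR : |x| ≤ R := abs_le.mpr ⟨hx.1, hx.2⟩
        have hx2 : x ^ (2 * k) ≤ R ^ (2 * k) := by
          rw [pow_mul, pow_mul]
          apply pow_le_pow_left₀ (sq_nonneg x)
          calc x ^ 2 = |x| ^ 2 := (sq_abs x).symm
            _ ≤ R ^ 2 := pow_le_pow_left₀ (abs_nonneg x) hxR 2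
        have hx2nn : 0 ≤ x ^ (2 * k) := by rw [pow_mul]; exact pow_nonneg (sq_nonneg x) k
        calc g x * x ^ (2 * k) ≤ |g x| * x ^ (2 * k) :=
              mul_le_mul_of_nonneg_right (le_abs_self _) hx2nn
          _ ≤ |g x| * R ^ (2 * k) := mul_le_mul_of_nonneg_left hx2 (abs_nonneg _)
      have heq : (∫ x in A, |g x| * R ^ (2 * k)) = (∫ x in A, |g x|) * R ^ (2 * k) :=
        integral_mul_const _ _
      have hle2 : (∫ x in A, |g x|) ≤ M :=
        setIntegral_le_integral hgint.abs (ae_of_all _ fun x => abs_nonneg _)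
      have hRnn : (0:ℝ) ≤ R ^ (2 * k) := pow_nonneg hR.le _
      calc (∫ x in A, f x) ≤ (∫ x in A, |g x|) * R ^ (2 * k) := by rw [← heq]; exact hmono
        _ ≤ M * R ^ (2 * k) := mul_le_mul_of_nonneg_right hle2 hRnn
    -- E2: integral over Aᶜ
    have hE2 : (∫ x in Aᶜ, f x) ≤ (g z / 2) * m ^ (2 * k) * (2 * ε) := by
      have hmeasAc : MeasurableSet (Aᶜ : Set ℝ) := measurableSet_Icc.compl
      have hsplit2 : (∫ x in Aᶜ, f x) = (∫ x in I, f x) + ∫ x in Aᶜ \ I, f x := by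
        rw [← setIntegral_union Set.disjoint_sdiff_right (hmeasAc.diff measurableSet_Icc)
          hfint.integrableOn hfint.integrableOn, Set.union_diff_cancel hIsubAc]
      have hrest : (∫ x in Aᶜ \ I, f x) ≤ 0 := by
        apply integral_nonpos_of_ae
        filter_upwards [ae_restrict_mem (hmeasAc.diff measurableSet_Icc)] with x hx
        have hxR : R < |x| := by
          have := hx.1; rwa [hAc] at this
        have hx2nn : 0 ≤ x ^ (2 * k) := by rw [pow_mul]; exact pow_nonneg (sq_nonneg x) k
        exact mul_nonpos_of_nonpos_of_nonneg (hle x hxR) hx2nn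
      have hIint : (∫ x in I, f x) ≤ (g z / 2) * m ^ (2 * k) * (2 * ε) := by
        have hconst : (∫ x in I, (g z / 2) * m ^ (2 * k)) = (g z / 2) * m ^ (2 * k) * (2 * ε) := by
          rw [setIntegral_const, Real.volume_real_Icc]
          rw [show z + ε - (z - ε) = 2 * ε by ring, max_eq_left (by linarith)]
          rw [smul_eq_mul, mul_comm]
        rw [← hconst]
        apply setIntegral_mono_on hfint.integrableOn ((integrableOn_const_iff (C := g z / 2 * m ^ (2 * k))).mpr ?_) measurableSet_Icc
        · intro x hx
          obtain ⟨hg2, hmx⟩ := hIV x hx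
          have hx2 : m ^ (2 * k) ≤ x ^ (2 * k) := by
            rw [pow_mul, pow_mul]
            apply pow_le_pow_left₀ (sq_nonneg m)
            calc m ^ 2 ≤ |x| ^ 2 := pow_le_pow_left₀ hm0.le hmx.le 2
              _ = x ^ 2 := sq_abs x
          have hx2nn : 0 ≤ x ^ (2 * k) := by rw [pow_mul]; exact pow_nonneg (sq_nonneg x) k
          calc g x * x ^ (2 * k) ≤ (g z / 2) * x ^ (2 * k) :=
                mul_le_mul_of_nonneg_right hg2.le hx2nn
            _ ≤ (g z / 2) * m ^ (2 * k) :=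
                mul_le_mul_of_nonpos_left hx2 (by linarith)
        · right
          rw [Real.volume_Icc]
          exact ENNReal.ofReal_lt_top
      linarith
    -- combine
    have hcomb : 0 ≤ M * R ^ (2 * k) + (g z / 2) * m ^ (2 * k) * (2 * ε) := by
      have := hsplit
      linarith
    have : c * m ^ (2 * k) = -((g z / 2) * m ^ (2 * k) * (2 * ε)) := by rw [hc]; ring
    linarith
  -- contradiction from growth
  set q : ℝ := (m / R) ^ 2 with hq
  have hq1 : 1 < q := by
    rw [hq]
    have : 1 < m / R := (one_lt_div hR).mpr hmR
    nlinarith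
  obtain ⟨k, hk⟩ := pow_unbounded_of_one_lt (M / c) hq1
  have hqk : q ^ k = m ^ (2 * k) / R ^ (2 * k) := by
    rw [hq, ← pow_mul, div_pow]
  have h1 : c * q ^ k ≤ M := by
    rw [hqk, mul_div_assoc', div_le_iff₀ (pow_pos hR _)]
    exact key k
  have h2 : M < c * q ^ k := by
    have := (div_lt_iff₀ hc0).mp hk
    linarith
  linarith

theorem moments_vanish_noncompact_support_sign_changes
    (g : ℝ → ℝ) (hcont : Continuous g)
    (hdecay : ∀ k : ℕ, ∃ C : ℝ, ∀ x : ℝ, |g x| ≤ C * (1 + |x|) ^ (-(k : ℝ)))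
    (hmom : ∀ k : ℕ, ∫ x : ℝ, g x * x ^ k = 0)
    (hsupp : ¬ IsCompact (tsupport g)) :
    ∃ x : ℕ → ℝ, Filter.Tendsto (fun n => |x n|) Filter.atTop Filter.atTop ∧
      (∀ n : ℕ, 0 < g (x (2 * n))) ∧ (∀ n : ℕ, g (x (2 * n + 1)) < 0) := by
  have hint : ∀ k : ℕ, Integrable (fun x : ℝ => g x * x ^ k) :=
    fun k => aux_integrable_mul_pow g hcont hdecay k
  have hne : ∀ R : ℝ, ∃ z : ℝ, R < |z| ∧ g z ≠ 0 := aux_unbounded_support g hsupp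
  have hpos : ∀ R : ℝ, ∃ x : ℝ, R < |x| ∧ 0 < g x := by
    intro R
    by_contra h
    push_neg at h
    exact aux_core g hcont hint hmom hne (max R 1)
      (zero_lt_one.trans_le (le_max_right R 1))
      (fun x hx => h x ((le_max_left R 1).trans_lt hx))
  have hneg : ∀ R : ℝ, ∃ x : ℝ, R < |x| ∧ g x < 0 := by
    intro R
    by_contra h
    push_neg at h
    apply aux_core (fun x => -g x) hcont.neg
      (fun k => by simp only [neg_mul]; exact (hint k).neg)
      (fun k => by simp [neg_mul, integral_neg, hmom k])
      (fun R' => by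
        obtain ⟨z, hz1, hz2⟩ := hne R'
        exact ⟨z, hz1, by simpa using hz2⟩)
      (max R 1) (zero_lt_one.trans_le (le_max_right R 1))
    intro x hx
    simp only [neg_nonpos]
    exact h x ((le_max_left R 1).trans_lt hx)
  choose u hu1 hu2 using hpos
  choose v hv1 hv2 using hneg
  refine ⟨fun n => if Even n then u n else v n, ?_, ?_, ?_⟩
  · apply tendsto_atTop_mono (fun n => ?_) tendsto_natCast_atTop_atTop
    by_cases h : Even n
    · simp only [h, if_pos]
      exact (hu1 (n : ℝ)).le
    · simp only [h, if_neg, not_false_iff]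
      exact (hv1 (n : ℝ)).le
  · intro n
    have he : Even (2 * n) := even_two_mul n
    simp only [he, if_pos]
    push_cast
    exact hu2 _
  · intro n
    have he : ¬ Even (2 * n + 1) := by simp [Nat.even_add_one, even_two_mul]
    simp only [he, if_neg, not_false_iff]
    push_cast
    exact hv2 _
end

section
/- Under the hypotheses of the jump theorem (f locally integrable, polynomial growth, continuous near b except a jump of height Θ = f(b+)−f(b−) at b = 0), the symmetric part contribution satisfies a^{-1/2}⟨f^S, Re κ_{a,0}⟩ → 0 as a → 0, where f^S(x) = (f(x)+f(−x))/2 is extended continuously at 0 with f^S(0) = 0. -/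
open MeasureTheory Filter Topology

private lemma aux_inv_sq {x : ℝ} (hx : 1 ≤ |x|) (N : ℕ) :
    (|x| ^ (N + 2))⁻¹ * |x| ^ N ≤ 2 * (1 + x ^ 2)⁻¹ := by
  have hx0 : (0:ℝ) < |x| := lt_of_lt_of_le one_pos hx
  have hxN : (0:ℝ) < |x| ^ N := pow_pos hx0 N
  have hxne : x ≠ 0 := by
    intro h; rw [h, abs_zero] at hx0; exact lt_irrefl 0 hx0
  have hx2 : (0:ℝ) < x ^ 2 := by positivity
  have h1sq : (1:ℝ) ≤ x ^ 2 := by nlinarith [sq_abs x]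
  have h2 : |x| ^ (N + 2) = |x| ^ N * x ^ 2 := by rw [pow_add, sq_abs]
  rw [h2, mul_inv, mul_comm ((|x| ^ N)⁻¹) ((x ^ 2)⁻¹), mul_assoc,
    inv_mul_cancel₀ (ne_of_gt hxN), mul_one]
  rw [inv_eq_one_div, show (2:ℝ) * (1 + x ^ 2)⁻¹ = 2 / (1 + x ^ 2) by
    rw [inv_eq_one_div]; ring]
  rw [div_le_div_iff₀ hx2 (by positivity)]
  nlinarith

private lemma aux_not_mem_Icc {x c : ℝ} (hc : 0 ≤ c) (hx : x ∉ Set.Icc (-c) c) :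
    c < |x| := by
  rw [Set.mem_Icc, not_and_or] at hx
  rcases hx with h | h
  · push_neg at h
    have h2 : c < -x := by linarith
    exact lt_of_lt_of_le h2 (neg_le_abs x)
  · push_neg at h
    exact lt_of_lt_of_le h (le_abs_self x)

theorem jump_symmetric_part_vanishes
    (f : ℝ → ℝ) (L R : ℝ)
    (hloc : MeasureTheory.LocallyIntegrable f)
    (hgrowth : ∃ (N : ℕ) (C M : ℝ), ∀ x : ℝ, M ≤ |x| → |f x| ≤ C * |x| ^ N)
    (hU : ∃ U ∈ 𝓝 (0:ℝ), ContinuousOn f (U \ {0}))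
    (hL : Filter.Tendsto f (𝓝[<] (0:ℝ)) (𝓝 L))
    (hR : Filter.Tendsto f (𝓝[>] (0:ℝ)) (𝓝 R))
    (hjump : L ≠ R)
    (hS0 : Filter.Tendsto (fun x => (f x + f (-x)) / 2) (𝓝[≠] (0:ℝ)) (𝓝 0))
    (κ : SchwartzMap ℝ ℂ) (hκ : IsSignatureWavelet κ) :
    Filter.Tendsto (fun a => (1 / a) * ∫ x : ℝ, ((f x + f (-x)) / 2) * (κ (x / a)).re)
      (𝓝[>] (0:ℝ)) (𝓝 0) := by
  obtain ⟨N, C, M, hgrow⟩ := hgrowth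
  set g : ℝ → ℝ := fun x => (f x + f (-x)) / 2 with hg_def
  -- nonnegativity of C
  have hMpos : (0:ℝ) < max M 1 := lt_of_lt_of_le one_pos (le_max_right M 1)
  have hC0 : 0 ≤ C := by
    have h1 := hgrow (max M 1) (by rw [abs_of_pos hMpos]; exact le_max_left M 1)
    have h2 : (0:ℝ) < |max M 1| ^ N := pow_pos (abs_pos.mpr (ne_of_gt hMpos)) N
    nlinarith [abs_nonneg (f (max M 1))]
  -- measurability
  have hfm : AEStronglyMeasurable f volume := hloc.aestronglyMeasurable
  have hfnm : AEStronglyMeasurable (fun x => f (-x)) volume :=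
    hfm.comp_measurePreserving (Measure.measurePreserving_neg _)
  have hgm : AEStronglyMeasurable g volume := by
    have h := (hfm.add hfnm).mul_const (2⁻¹ : ℝ)
    simpa [hg_def, div_eq_mul_inv] using h
  -- g is integrable on symmetric compact intervals
  have hgon : ∀ r : ℝ, 0 ≤ r → IntegrableOn g (Set.Icc (-r) r) := by
    intro r hr
    have h1 : IntervalIntegrable f volume (-r) r :=
      (hloc.integrableOn_isCompact isCompact_uIcc).intervalIntegrable
    have h2 : IntervalIntegrable (fun x => f (-x)) volume (-r) r := by
      have := (IntervalIntegrable.iff_comp_neg (f := f)).mp h1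
      rw [neg_neg] at this
      exact this.symm
    have h3 : IntervalIntegrable g volume (-r) r := (h1.add h2).div_const 2
    exact (intervalIntegrable_iff_integrableOn_Icc_of_le (by linarith)).mp h3
  -- growth of g
  have hggrow : ∀ x : ℝ, max M 1 ≤ |x| → |g x| ≤ C * |x| ^ N := by
    intro x hx
    have h1 := hgrow x (le_trans (le_max_left M 1) hx)
    have h2 := hgrow (-x) (by rw [abs_neg]; exact le_trans (le_max_left M 1) hx)
    rw [abs_neg] at h2
    have : |g x| ≤ (|f x| + |f (-x)|) / 2 := by
      rw [hg_def]
      simp only [abs_div, abs_two]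
      gcongr
      exact abs_add_le _ _
    linarith
  -- Schwartz bounds
  obtain ⟨C₀, hC₀pos, hC₀⟩ := κ.decay 0 0
  have hC₀' : ∀ y : ℝ, ‖κ y‖ ≤ C₀ := by
    intro y
    have := hC₀ y
    rwa [pow_zero, one_mul, norm_iteratedFDeriv_zero] at this
  obtain ⟨Ck, hCkpos, hCk⟩ := κ.decay (N + 2) 0
  have hCk' : ∀ y : ℝ, |y| ^ (N + 2) * ‖κ y‖ ≤ Ck := by
    intro y
    have := hCk y
    rwa [norm_iteratedFDeriv_zero, Real.norm_eq_abs] at this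
  -- decay bound for rescaled κ
  have hκdecay : ∀ a x : ℝ, 0 < a → x ≠ 0 →
      ‖κ (x / a)‖ ≤ Ck * a ^ (N + 2) * (|x| ^ (N + 2))⁻¹ := by
    intro a x ha hx
    have hax : |x / a| = |x| / a := by rw [abs_div, abs_of_pos ha]
    have hp : (0:ℝ) < (|x| / a) ^ (N + 2) :=
      pow_pos (div_pos (abs_pos.mpr hx) ha) _
    have h1 : ‖κ (x / a)‖ ≤ Ck / (|x| / a) ^ (N + 2) := by
      rw [le_div_iff₀ hp, mul_comm]
      rw [← hax]
      exact hCk' (x / a)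
    calc ‖κ (x / a)‖ ≤ Ck / (|x| / a) ^ (N + 2) := h1
      _ = Ck * a ^ (N + 2) * (|x| ^ (N + 2))⁻¹ := by
          rw [div_pow, div_div_eq_mul_div, div_eq_mul_inv]
  -- |Re| ≤ norm
  have hre : ∀ z : ℂ, |z.re| ≤ ‖z‖ := fun z => Complex.abs_re_le_norm z
  -- main ε-argument
  rw [NormedAddCommGroup.tendsto_nhds_zero]
  intro ε hε
  set K₁ : ℝ := ∫ y : ℝ, ‖κ y‖ with hK₁def
  have hK₁0 : 0 ≤ K₁ := integral_nonneg fun y => norm_nonneg _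
  set ε' : ℝ := ε / (2 * (K₁ + 1)) with hε'def
  have hε'pos : 0 < ε' := by
    apply div_pos hε; nlinarith
  obtain ⟨δ, hδ0, hδ⟩ := Metric.tendsto_nhdsWithin_nhds.mp hS0 ε' hε'pos
  set δ₂ : ℝ := δ / 2 with hδ₂def
  have hδ₂0 : 0 < δ₂ := by positivity
  -- small values of g near 0
  have hgsmall : ∀ x : ℝ, x ≠ 0 → |x| ≤ δ₂ → |g x| ≤ ε' := by
    intro x hx hxd
    have h1 : dist x 0 < δ := by
      rw [Real.dist_eq, sub_zero]
      calc |x| ≤ δ₂ := hxd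
        _ < δ := by rw [hδ₂def]; linarith
    have h2 := hδ (by simpa using hx) h1
    rw [Real.dist_eq, sub_zero] at h2
    exact le_of_lt h2
  set D : ℝ := max (max M 1) δ₂ with hDdef
  have hD1 : (1:ℝ) ≤ D := le_trans (le_max_right M 1) (le_max_left _ _)
  have hDM : max M 1 ≤ D := le_max_left _ _
  have hDδ : δ₂ ≤ D := le_max_right _ _
  have hD0 : (0:ℝ) ≤ D := le_trans zero_le_one hD1
  -- weight function
  set w : ℝ → ℝ := fun x => ‖g x‖ * (|x| ^ (N + 2))⁻¹ with hwdef
  have hwm : AEStronglyMeasurable w volume := by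
    apply hgm.norm.mul
    exact ((measurable_abs.pow_const (N + 2)).inv).aestronglyMeasurable
  have hwnonneg : ∀ x, 0 ≤ w x := by
    intro x; rw [hwdef]; positivity
  -- integrability of w outside [-δ₂, δ₂]
  have hwint : IntegrableOn w (Set.Icc (-δ₂) δ₂)ᶜ := by
    have hsub : (Set.Icc (-δ₂) δ₂)ᶜ ⊆
        (Set.Icc (-D) D \ Set.Icc (-δ₂) δ₂) ∪ (Set.Icc (-D) D)ᶜ := by
      intro x hx
      by_cases hxD : x ∈ Set.Icc (-D) D
      · exact Or.inl ⟨hxD, hx⟩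
      · exact Or.inr hxD
    apply IntegrableOn.mono_set _ hsub
    apply IntegrableOn.union
    · -- middle region
      apply Integrable.mono' (MeasureTheory.IntegrableOn.mono_set
        ((hgon D hD0).norm.const_mul ((δ₂ ^ (N + 2))⁻¹)) Set.diff_subset)
      · exact hwm.restrict
      · rw [ae_restrict_iff' (measurableSet_Icc.diff measurableSet_Icc)]
        apply ae_of_all
        intro x hx
        have hxd : δ₂ ≤ |x| := by
          by_contra h
          push_neg at h
          exact hx.2 (by rw [Set.mem_Icc]; constructor <;> [linarith [neg_abs_le x]; linarith [le_abs_self x]])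
        have h1 : (|x| ^ (N + 2))⁻¹ ≤ (δ₂ ^ (N + 2))⁻¹ := by
          exact inv_anti₀ (pow_pos hδ₂0 _) (pow_le_pow_left₀ (le_of_lt hδ₂0) hxd _)
        rw [Real.norm_eq_abs, abs_of_nonneg (hwnonneg x), hwdef]
        calc ‖g x‖ * (|x| ^ (N + 2))⁻¹ ≤ ‖g x‖ * (δ₂ ^ (N + 2))⁻¹ :=
              mul_le_mul_of_nonneg_left h1 (norm_nonneg _)
          _ = (δ₂ ^ (N + 2))⁻¹ * ‖g x‖ := mul_comm _ _
    · -- outer region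
      apply Integrable.mono' ((integrable_inv_one_add_sq.const_mul (2 * C)).integrableOn)
      · exact hwm.restrict
      · rw [ae_restrict_iff' measurableSet_Icc.compl]
        apply ae_of_all
        intro x hx
        have hxD : D < |x| := aux_not_mem_Icc hD0 hx
        have hx1 : 1 ≤ |x| := le_trans hD1 (le_of_lt hxD)
        have hxM : max M 1 ≤ |x| := le_trans hDM (le_of_lt hxD)
        rw [Real.norm_eq_abs, abs_of_nonneg (hwnonneg x), hwdef]
        calc ‖g x‖ * (|x| ^ (N + 2))⁻¹
            ≤ (C * |x| ^ N) * (|x| ^ (N + 2))⁻¹ := by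
              apply mul_le_mul_of_nonneg_right _ (by positivity)
              rw [Real.norm_eq_abs]; exact hggrow x hxM
          _ = C * ((|x| ^ (N + 2))⁻¹ * |x| ^ N) := by ring
          _ ≤ C * (2 * (1 + x ^ 2)⁻¹) :=
              mul_le_mul_of_nonneg_left (aux_inv_sq hx1 N) hC0
          _ = 2 * C * (1 + x ^ 2)⁻¹ := by ring
  set I : ℝ := ∫ x in (Set.Icc (-δ₂) δ₂)ᶜ, w x with hIdef
  have hI0 : 0 ≤ I := integral_nonneg hwnonneg
  set a₀ : ℝ := min 1 (ε / (2 * (Ck * I + 1))) with ha₀def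
  have hCkI : 0 ≤ Ck * I := mul_nonneg (le_of_lt hCkpos) hI0
  have ha₀pos : 0 < a₀ := by
    apply lt_min one_pos
    apply div_pos hε
    nlinarith
  filter_upwards [Ioc_mem_nhdsGT ha₀pos] with a ha
  obtain ⟨ha0, haa₀⟩ := ha
  have ha1 : a ≤ 1 := le_trans haa₀ (min_le_left _ _)
  have hane : a ≠ 0 := ne_of_gt ha0
  -- integrability of the full integrand
  have hκc : Continuous fun x : ℝ => (κ (x / a)).re :=
    Complex.continuous_re.comp (κ.continuous.comp (continuous_id.div_const a))
  have hGm : AEStronglyMeasurable (fun x => g x * (κ (x / a)).re) volume :=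
    hgm.mul hκc.aestronglyMeasurable
  have hGD : IntegrableOn (fun x => g x * (κ (x / a)).re) (Set.Icc (-D) D) := by
    apply Integrable.mono' ((hgon D hD0).norm.const_mul C₀)
    · exact hGm.restrict
    · apply ae_of_all
      intro x
      rw [Real.norm_eq_abs, abs_mul]
      calc |g x| * |(κ (x / a)).re| ≤ |g x| * C₀ := by
            apply mul_le_mul_of_nonneg_left _ (abs_nonneg _)
            exact le_trans (hre _) (hC₀' _)
        _ = C₀ * ‖g x‖ := by rw [Real.norm_eq_abs]; ring
  have hGDc : IntegrableOn (fun x => g x * (κ (x / a)).re) (Set.Icc (-D) D)ᶜ := by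
    apply Integrable.mono'
      ((integrable_inv_one_add_sq.const_mul (C * (Ck * a ^ (N + 2)) * 2)).integrableOn)
    · exact hGm.restrict
    · rw [ae_restrict_iff' measurableSet_Icc.compl]
      apply ae_of_all
      intro x hx
      have hxD : D < |x| := aux_not_mem_Icc hD0 hx
      have hx1 : 1 ≤ |x| := le_trans hD1 (le_of_lt hxD)
      have hxM : max M 1 ≤ |x| := le_trans hDM (le_of_lt hxD)
      have hxne : x ≠ 0 := by
        intro h; rw [h, abs_zero] at hx1; linarith
      rw [Real.norm_eq_abs, abs_mul]
      calc |g x| * |(κ (x / a)).re|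
          ≤ (C * |x| ^ N) * (Ck * a ^ (N + 2) * (|x| ^ (N + 2))⁻¹) := by
            apply mul_le_mul (hggrow x hxM)
              (le_trans (hre _) (hκdecay a x ha0 hxne)) (abs_nonneg _)
            exact le_trans (abs_nonneg _) (hggrow x hxM)
        _ = (C * (Ck * a ^ (N + 2))) * ((|x| ^ (N + 2))⁻¹ * |x| ^ N) := by ring
        _ ≤ (C * (Ck * a ^ (N + 2))) * (2 * (1 + x ^ 2)⁻¹) := by
            apply mul_le_mul_of_nonneg_left (aux_inv_sq hx1 N)
            positivity
        _ = C * (Ck * a ^ (N + 2)) * 2 * (1 + x ^ 2)⁻¹ := by ring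
  have hGint : Integrable (fun x => g x * (κ (x / a)).re) volume := by
    rw [← integrableOn_univ, ← Set.union_compl_self (Set.Icc (-D) D)]
    exact hGD.union hGDc
  -- the rescaled κ-norm is integrable
  have haK : Integrable (fun x : ℝ => ‖κ (x / a)‖) volume :=
    (κ.integrable.norm).comp_div hane
  have haKval : (∫ x : ℝ, ‖κ (x / a)‖) = a * K₁ := by
    rw [hK₁def, MeasureTheory.Measure.integral_comp_div (fun y => ‖κ y‖) a,
      smul_eq_mul, abs_of_pos ha0]
  -- split the integral of the norm
  have hsplit : (∫ x : ℝ, ‖g x * (κ (x / a)).re‖) =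
      (∫ x in Set.Icc (-δ₂) δ₂, ‖g x * (κ (x / a)).re‖) +
      (∫ x in (Set.Icc (-δ₂) δ₂)ᶜ, ‖g x * (κ (x / a)).re‖) :=
    (integral_add_compl measurableSet_Icc hGint.norm).symm
  -- inner bound
  have hinner : (∫ x in Set.Icc (-δ₂) δ₂, ‖g x * (κ (x / a)).re‖) ≤ ε' * (a * K₁) := by
    have h0 : ∀ᵐ x : ℝ, x ≠ 0 := by
      rw [ae_iff]
      have : {x : ℝ | ¬x ≠ 0} = {0} := by ext x; simp
      rw [this]
      exact Real.volume_singleton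
    have h1 : (∫ x in Set.Icc (-δ₂) δ₂, ‖g x * (κ (x / a)).re‖) ≤
        ∫ x in Set.Icc (-δ₂) δ₂, ε' * ‖κ (x / a)‖ := by
      apply integral_mono_ae hGint.norm.integrableOn
        ((haK.const_mul ε').integrableOn)
      filter_upwards [ae_restrict_mem measurableSet_Icc,
        h0.filter_mono (ae_mono Measure.restrict_le_self)] with x hxs hx0
      rw [Real.norm_eq_abs, abs_mul]
      have hxd : |x| ≤ δ₂ := abs_le.mpr ⟨by linarith [hxs.1], hxs.2⟩
      exact mul_le_mul (hgsmall x hx0 hxd) (hre _) (abs_nonneg _) (le_of_lt hε'pos)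
    calc (∫ x in Set.Icc (-δ₂) δ₂, ‖g x * (κ (x / a)).re‖)
        ≤ ∫ x in Set.Icc (-δ₂) δ₂, ε' * ‖κ (x / a)‖ := h1
      _ ≤ ∫ x : ℝ, ε' * ‖κ (x / a)‖ := by
          apply setIntegral_le_integral (haK.const_mul ε')
          apply ae_of_all
          intro x
          positivity
      _ = ε' * (a * K₁) := by rw [integral_const_mul, haKval]
  -- outer bound
  have houter : (∫ x in (Set.Icc (-δ₂) δ₂)ᶜ, ‖g x * (κ (x / a)).re‖) ≤
      Ck * a ^ (N + 2) * I := by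
    have h1 : (∫ x in (Set.Icc (-δ₂) δ₂)ᶜ, ‖g x * (κ (x / a)).re‖) ≤
        ∫ x in (Set.Icc (-δ₂) δ₂)ᶜ, (Ck * a ^ (N + 2)) * w x := by
      apply integral_mono_ae hGint.norm.integrableOn (hwint.const_mul _)
      filter_upwards [ae_restrict_mem measurableSet_Icc.compl] with x hxs
      have hxd : δ₂ < |x| := aux_not_mem_Icc (le_of_lt hδ₂0) hxs
      have hxne : x ≠ 0 := by
        intro h; rw [h, abs_zero] at hxd; linarith
      rw [Real.norm_eq_abs, abs_mul]
      calc |g x| * |(κ (x / a)).re|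
          ≤ |g x| * (Ck * a ^ (N + 2) * (|x| ^ (N + 2))⁻¹) :=
            mul_le_mul_of_nonneg_left
              (le_trans (hre _) (hκdecay a x ha0 hxne)) (abs_nonneg _)
        _ = (Ck * a ^ (N + 2)) * (‖g x‖ * (|x| ^ (N + 2))⁻¹) := by
            rw [Real.norm_eq_abs]; ring
        _ = (Ck * a ^ (N + 2)) * w x := by rw [hwdef]
    calc (∫ x in (Set.Icc (-δ₂) δ₂)ᶜ, ‖g x * (κ (x / a)).re‖)
        ≤ ∫ x in (Set.Icc (-δ₂) δ₂)ᶜ, (Ck * a ^ (N + 2)) * w x := h1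
      _ = Ck * a ^ (N + 2) * I := by rw [integral_const_mul, hIdef]
  -- put it together
  have hnorm : ‖(1 / a) * ∫ x : ℝ, g x * (κ (x / a)).re‖ ≤
      ε' * K₁ + Ck * a ^ (N + 1) * I := by
    rw [Real.norm_eq_abs, abs_mul, abs_of_pos (by positivity : (0:ℝ) < 1 / a)]
    have h1 : |∫ x : ℝ, g x * (κ (x / a)).re| ≤ ∫ x : ℝ, ‖g x * (κ (x / a)).re‖ := by
      rw [← Real.norm_eq_abs]
      exact norm_integral_le_integral_norm _
    calc (1 / a) * |∫ x : ℝ, g x * (κ (x / a)).re|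
        ≤ (1 / a) * (∫ x : ℝ, ‖g x * (κ (x / a)).re‖) := by
          apply mul_le_mul_of_nonneg_left h1 (by positivity)
      _ ≤ (1 / a) * (ε' * (a * K₁) + Ck * a ^ (N + 2) * I) := by
          apply mul_le_mul_of_nonneg_left _ (by positivity)
          rw [hsplit]
          exact add_le_add hinner houter
      _ = ε' * K₁ + Ck * a ^ (N + 1) * I := by
          have hpow : a ^ (N + 2) = a * a ^ (N + 1) := by ring
          field_simp
          ring
  -- final numeric estimates
  have hfin1 : ε' * K₁ < ε / 2 := by
    have h1 : ε' * K₁ < ε' * (K₁ + 1) :=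
      mul_lt_mul_of_pos_left (lt_add_one K₁) hε'pos
    have h2 : ε' * (K₁ + 1) = ε / 2 := by
      rw [hε'def]
      field_simp
    linarith
  have hfin2 : Ck * a ^ (N + 1) * I < ε / 2 := by
    have hpow : a ^ (N + 1) ≤ a := by
      calc a ^ (N + 1) ≤ a ^ 1 := pow_le_pow_of_le_one (le_of_lt ha0) ha1 (by omega)
        _ = a := pow_one a
    have haε : a ≤ ε / (2 * (Ck * I + 1)) := le_trans haa₀ (min_le_right _ _)
    have h1 : Ck * a ^ (N + 1) * I ≤ (Ck * I) * a := by
      calc Ck * a ^ (N + 1) * I ≤ Ck * a * I := by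
            apply mul_le_mul_of_nonneg_right _ hI0
            exact mul_le_mul_of_nonneg_left hpow (le_of_lt hCkpos)
        _ = (Ck * I) * a := by ring
    have hq : 0 < ε / (2 * (Ck * I + 1)) := by
      apply div_pos hε; nlinarith
    have h2 : (Ck * I) * a ≤ (Ck * I) * (ε / (2 * (Ck * I + 1))) :=
      mul_le_mul_of_nonneg_left haε hCkI
    have h3 : (Ck * I) * (ε / (2 * (Ck * I + 1))) <
        (Ck * I + 1) * (ε / (2 * (Ck * I + 1))) :=
      mul_lt_mul_of_pos_right (lt_add_one _) hq
    have h4 : (Ck * I + 1) * (ε / (2 * (Ck * I + 1))) = ε / 2 := by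
      field_simp
    linarith
  calc ‖(1 / a) * ∫ x : ℝ, g x * (κ (x / a)).re‖ ≤ ε' * K₁ + Ck * a ^ (N + 1) * I :=
        hnorm
    _ < ε := by linarith
end
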